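/- Let σ: E(K_{4n}) → {-1,1} and let M be a perfect matching of K_{4n} minimizing |σ(M)| among all perfect matchings, with σ(M) > 0. Then for every edge e of M with σ(e) = 1 and every edge f of M with σ(f) = −1, there do not exist two disjoint edges e', f' between e and f (i.e., each joining an endpoint of e to an endpoint of f) with σ(e') = σ(f') = −1. -/

import Mathlib

open Finset

noncomputable def sumE {m : ℕ} (σ : Sym2 (Fin m) → ℤ) (S : Set (Sym2 (Fin m))) : ℤ :=
  ∑ e ∈ S.toFinite.toFinset, σ e

def Kc (m : ℕ) : SimpleGraph (Fin m) := ⊤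

lemma card_pm {m : ℕ} {G : SimpleGraph (Fin m)} {M : G.Subgraph}
    (hM : M.IsPerfectMatching) : 2 * M.edgeSet.toFinite.toFinset.card = m := by
  classical
  have hW : ∀ v, ∃! w, M.Adj v w := fun v => hM.1 (hM.2 v)
  set W : Fin m → Fin m := fun v => (hW v).choose with hWdef
  have hWadj : ∀ v, M.Adj v (W v) := fun v => (hW v).choose_spec.1
  have hWu : ∀ v y, M.Adj v y → y = W v := fun v y h => (hW v).choose_spec.2 y h
  have hmap : ∀ v ∈ (univ : Finset (Fin m)), s(v, W v) ∈ M.edgeSet.toFinite.toFinset := by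
    intro v _
    rw [Set.Finite.mem_toFinset]
    exact (SimpleGraph.Subgraph.mem_edgeSet).mpr (hWadj v)
  have hcard := Finset.card_eq_sum_card_fiberwise hmap
  have hfib : ∀ ε ∈ M.edgeSet.toFinite.toFinset,
      (univ.filter (fun v => s(v, W v) = ε)).card = 2 := by
    intro ε hε
    induction ε using Sym2.ind with
    | _ a b =>
      rw [Set.Finite.mem_toFinset, SimpleGraph.Subgraph.mem_edgeSet] at hε
      have hab : a ≠ b := (M.adj_sub hε).ne
      have : univ.filter (fun v => s(v, W v) = s(a, b)) = {a, b} := by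
        ext v
        simp only [Finset.mem_filter, Finset.mem_univ, true_and, Finset.mem_insert,
          Finset.mem_singleton, Sym2.eq_iff]
        constructor
        · rintro (⟨h1, h2⟩ | ⟨h1, h2⟩)
          · exact Or.inl h1
          · exact Or.inr h1
        · rintro (rfl | rfl)
          · exact Or.inl ⟨rfl, (hWu v b hε).symm⟩
          · exact Or.inr ⟨rfl, (hWu v a hε.symm).symm⟩
      rw [this, Finset.card_pair hab]
  rw [Finset.sum_congr rfl hfib] at hcard
  simp only [Finset.sum_const, smul_eq_mul, Finset.card_univ, Fintype.card_fin] at hcard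
  omega

theorem stmt4 (n : ℕ) (hn : 0 < n) (σ : Sym2 (Fin (4*n)) → ℤ)
    (hσ : ∀ e ∈ (Kc (4*n)).edgeSet, σ e = 1 ∨ σ e = -1)
    (M : (Kc (4*n)).Subgraph) (hM : M.IsPerfectMatching)
    (hmin : ∀ N : (Kc (4*n)).Subgraph, N.IsPerfectMatching →
      |sumE σ M.edgeSet| ≤ |sumE σ N.edgeSet|)
    (hpos : 0 < sumE σ M.edgeSet)
    (u1 u2 v1 v2 : Fin (4*n))
    (he : s(u1,u2) ∈ M.edgeSet) (hf : s(v1,v2) ∈ M.edgeSet)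
    (he1 : σ s(u1,u2) = 1) (hf1 : σ s(v1,v2) = -1) :
    ¬ (σ s(u1,v1) = -1 ∧ σ s(u2,v2) = -1) := by
  classical
  rintro ⟨he', hf'⟩
  rw [SimpleGraph.Subgraph.mem_edgeSet] at he hf
  have hU : ∀ v w y, M.Adj v w → M.Adj v y → y = w := by
    intro v w y h1 h2
    obtain ⟨z, hz, hzu⟩ := hM.1 (hM.2 v)
    rw [hzu w h1, hzu y h2]
  have hef : s(u1,u2) ≠ s(v1,v2) := fun h => by rw [h, hf1] at he1; exact absurd he1 (by decide)
  have h12 : u1 ≠ u2 := (M.adj_sub he).ne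
  have h34 : v1 ≠ v2 := (M.adj_sub hf).ne
  have h13 : u1 ≠ v1 := by
    rintro rfl
    exact hef (by rw [Sym2.eq_iff]; exact Or.inl ⟨rfl, (hU u1 u2 v2 he hf).symm⟩)
  have h14 : u1 ≠ v2 := by
    rintro rfl
    exact hef (by rw [Sym2.eq_iff]; exact Or.inr ⟨rfl, (hU u1 u2 v1 he hf.symm).symm⟩)
  have h23 : u2 ≠ v1 := by
    rintro rfl
    exact hef (by rw [Sym2.eq_iff]; exact Or.inr ⟨(hU u2 u1 v2 he.symm hf).symm, rfl⟩)
  have h24 : u2 ≠ v2 := by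
    rintro rfl
    exact hef (by rw [Sym2.eq_iff]; exact Or.inl ⟨(hU u2 u1 v1 he.symm hf.symm).symm, rfl⟩)
  -- partner uniqueness at the four special vertices
  have hout1 : ∀ w, M.Adj u1 w → w = u2 := fun w h => hU u1 u2 w he h
  have hout2 : ∀ w, M.Adj u2 w → w = u1 := fun w h => hU u2 u1 w he.symm h
  have hout3 : ∀ w, M.Adj v1 w → w = v2 := fun w h => hU v1 v2 w hf h
  have hout4 : ∀ w, M.Adj v2 w → w = v1 := fun w h => hU v2 v1 w hf.symm h
  -- the swapped subgraph
  set N : (Kc (4*n)).Subgraph :=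
    { verts := Set.univ
      Adj := fun x y =>
        (M.Adj x y ∧ x ≠ u1 ∧ x ≠ u2 ∧ x ≠ v1 ∧ x ≠ v2 ∧ y ≠ u1 ∧ y ≠ u2 ∧ y ≠ v1 ∧ y ≠ v2)
        ∨ (x = u1 ∧ y = v1) ∨ (x = v1 ∧ y = u1) ∨ (x = u2 ∧ y = v2) ∨ (x = v2 ∧ y = u2)
      adj_sub := by
        rintro x y (⟨h, _⟩ | ⟨rfl, rfl⟩ | ⟨rfl, rfl⟩ | ⟨rfl, rfl⟩ | ⟨rfl, rfl⟩)
        · exact M.adj_sub h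
        · exact h13
        · exact h13.symm
        · exact h24
        · exact h24.symm
      edge_vert := fun _ => Set.mem_univ _
      symm := by
        constructor
        rintro x y (⟨h, h1, h2, h3, h4, h5, h6, h7, h8⟩ | ⟨rfl, rfl⟩ | ⟨rfl, rfl⟩ |
          ⟨rfl, rfl⟩ | ⟨rfl, rfl⟩)
        · exact Or.inl ⟨h.symm, h5, h6, h7, h8, h1, h2, h3, h4⟩
        · exact Or.inr (Or.inr (Or.inl ⟨rfl, rfl⟩))
        · exact Or.inr (Or.inl ⟨rfl, rfl⟩)
        · exact Or.inr (Or.inr (Or.inr (Or.inr ⟨rfl, rfl⟩)))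
        · exact Or.inr (Or.inr (Or.inr (Or.inl ⟨rfl, rfl⟩))) } with hNdef
  have hNpm : N.IsPerfectMatching := by
    constructor
    · intro v _
      by_cases hv1 : v = u1
      · subst hv1
        refine ⟨v1, Or.inr (Or.inl ⟨rfl, rfl⟩), ?_⟩
        rintro y (⟨_, h1, _⟩ | ⟨_, rfl⟩ | ⟨h, _⟩ | ⟨h, _⟩ | ⟨h, _⟩)
        · exact absurd rfl h1
        · rfl
        · exact absurd h h13
        · exact absurd h h12
        · exact absurd h h14
      by_cases hv2 : v = u2
      · subst hv2
        refine ⟨v2, Or.inr (Or.inr (Or.inr (Or.inl ⟨rfl, rfl⟩))), ?_⟩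
        rintro y (⟨_, _, h2, _⟩ | ⟨h, _⟩ | ⟨h, _⟩ | ⟨_, rfl⟩ | ⟨h, _⟩)
        · exact absurd rfl h2
        · exact absurd h h12.symm
        · exact absurd h h23
        · rfl
        · exact absurd h h24
      by_cases hv3 : v = v1
      · subst hv3
        refine ⟨u1, Or.inr (Or.inr (Or.inl ⟨rfl, rfl⟩)), ?_⟩
        rintro y (⟨_, _, _, h3, _⟩ | ⟨h, _⟩ | ⟨_, rfl⟩ | ⟨h, _⟩ | ⟨h, _⟩)
        · exact absurd rfl h3
        · exact absurd h h13.symm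
        · rfl
        · exact absurd h h23.symm
        · exact absurd h h34
      by_cases hv4 : v = v2
      · subst hv4
        refine ⟨u2, Or.inr (Or.inr (Or.inr (Or.inr ⟨rfl, rfl⟩))), ?_⟩
        rintro y (⟨_, _, _, _, h4, _⟩ | ⟨h, _⟩ | ⟨h, _⟩ | ⟨h, _⟩ | ⟨_, rfl⟩)
        · exact absurd rfl h4
        · exact absurd h h14.symm
        · exact absurd h h34.symm
        · exact absurd h h24.symm
        · rfl
      · obtain ⟨w, hw, hwu⟩ := hM.1 (hM.2 v)
        have hw1 : w ≠ u1 := fun h => hv2 (hout1 v (h ▸ hw.symm))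
        have hw2 : w ≠ u2 := fun h => hv1 (hout2 v (h ▸ hw.symm))
        have hw3 : w ≠ v1 := fun h => hv4 (hout3 v (h ▸ hw.symm))
        have hw4 : w ≠ v2 := fun h => hv3 (hout4 v (h ▸ hw.symm))
        refine ⟨w, Or.inl ⟨hw, hv1, hv2, hv3, hv4, hw1, hw2, hw3, hw4⟩, ?_⟩
        rintro y (⟨h, _⟩ | ⟨h, _⟩ | ⟨h, _⟩ | ⟨h, _⟩ | ⟨h, _⟩)
        · exact hwu y h
        · exact absurd h hv1
        · exact absurd h hv3
        · exact absurd h hv2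
        · exact absurd h hv4
    · intro v; exact Set.mem_univ v
  have hNedge : N.edgeSet =
      (M.edgeSet \ {s(u1,u2), s(v1,v2)}) ∪ {s(u1,v1), s(u2,v2)} := by
    ext ε
    induction ε using Sym2.ind with
    | _ x y =>
      simp only [SimpleGraph.Subgraph.mem_edgeSet, Set.mem_union, Set.mem_diff,
        Set.mem_insert_iff, Set.mem_singleton_iff, Sym2.eq_iff, not_or]
      constructor
      · rintro (⟨h, h1, h2, h3, h4, h5, h6, h7, h8⟩ | ⟨rfl, rfl⟩ | ⟨rfl, rfl⟩ |
          ⟨rfl, rfl⟩ | ⟨rfl, rfl⟩)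
        · exact Or.inl ⟨h, ⟨fun p => h1 p.1, fun p => h2 p.1⟩, fun p => h3 p.1, fun p => h4 p.1⟩
        · exact Or.inr (Or.inl (Or.inl ⟨rfl, rfl⟩))
        · exact Or.inr (Or.inl (Or.inr ⟨rfl, rfl⟩))
        · exact Or.inr (Or.inr (Or.inl ⟨rfl, rfl⟩))
        · exact Or.inr (Or.inr (Or.inr ⟨rfl, rfl⟩))
      · rintro (⟨h, ⟨hne1, hne2⟩, hnf1, hnf2⟩ | (⟨rfl, rfl⟩ | ⟨rfl, rfl⟩) | (⟨rfl, rfl⟩ | ⟨rfl, rfl⟩))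
        · refine Or.inl ⟨h, ?_, ?_, ?_, ?_, ?_, ?_, ?_, ?_⟩
          · rintro rfl; exact hne1 ⟨rfl, hout1 y h⟩
          · rintro rfl; exact hne2 ⟨rfl, hout2 y h⟩
          · rintro rfl; exact hnf1 ⟨rfl, hout3 y h⟩
          · rintro rfl; exact hnf2 ⟨rfl, hout4 y h⟩
          · rintro rfl; exact hne2 ⟨hout1 x h.symm, rfl⟩
          · rintro rfl; exact hne1 ⟨hout2 x h.symm, rfl⟩
          · rintro rfl; exact hnf2 ⟨hout3 x h.symm, rfl⟩
          · rintro rfl; exact hnf1 ⟨hout4 x h.symm, rfl⟩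
        · exact Or.inr (Or.inl ⟨rfl, rfl⟩)
        · exact Or.inr (Or.inr (Or.inl ⟨rfl, rfl⟩))
        · exact Or.inr (Or.inr (Or.inr (Or.inl ⟨rfl, rfl⟩)))
        · exact Or.inr (Or.inr (Or.inr (Or.inr ⟨rfl, rfl⟩)))
  -- finset version
  set A := M.edgeSet.toFinite.toFinset with hA
  have heA : s(u1,u2) ∈ A := by rw [Set.Finite.mem_toFinset]; exact he
  have hfA : s(v1,v2) ∈ A := by rw [Set.Finite.mem_toFinset]; exact hf
  have he'A : s(u1,v1) ∉ A := by
    rw [Set.Finite.mem_toFinset, SimpleGraph.Subgraph.mem_edgeSet]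
    intro h; exact h23 (hout1 v1 h).symm
  have hf'A : s(u2,v2) ∉ A := by
    rw [Set.Finite.mem_toFinset, SimpleGraph.Subgraph.mem_edgeSet]
    intro h; exact h14 (hout2 v2 h).symm
  have he'f' : s(u1,v1) ≠ s(u2,v2) := by
    intro hq
    rw [Sym2.eq_iff] at hq
    rcases hq with ⟨h, _⟩ | ⟨h, _⟩
    · exact h12 h
    · exact h14 h
  have hFin : N.edgeSet.toFinite.toFinset =
      (A \ {s(u1,u2), s(v1,v2)}) ∪ {s(u1,v1), s(u2,v2)} := by
    ext ε
    simp only [Set.Finite.mem_toFinset, hNedge, Set.mem_union, Set.mem_diff,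
      Set.mem_insert_iff, Set.mem_singleton_iff, Finset.mem_union, Finset.mem_sdiff,
      Finset.mem_insert, Finset.mem_singleton, hA]
  have hdisj : Disjoint (A \ {s(u1,u2), s(v1,v2)}) ({s(u1,v1), s(u2,v2)} : Finset _) := by
    rw [Finset.disjoint_right]
    intro x hx
    simp only [Finset.mem_insert, Finset.mem_singleton] at hx
    rcases hx with rfl | rfl
    · simp only [Finset.mem_sdiff]; tauto
    · simp only [Finset.mem_sdiff]; tauto
  have hsub : ({s(u1,u2), s(v1,v2)} : Finset _) ⊆ A := by
    intro x hx
    simp only [Finset.mem_insert, Finset.mem_singleton] at hx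
    rcases hx with rfl | rfl
    · exact heA
    · exact hfA
  have hsumN : sumE σ N.edgeSet = sumE σ M.edgeSet - 2 := by
    rw [sumE, sumE, hFin, Finset.sum_union hdisj, Finset.sum_sdiff_eq_sub hsub,
      Finset.sum_pair hef, Finset.sum_pair he'f', he1, hf1, he', hf']
    ring
  -- parity
  have hcard : 2 * A.card = 4 * n := card_pm hM
  have hAodd : ∀ ε ∈ A, σ ε % 2 = 1 := by
    intro ε hε
    rw [Set.Finite.mem_toFinset] at hε
    rcases hσ ε (M.edgeSet_subset hε) with h | h <;> rw [h] <;> decide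
  have heven : sumE σ M.edgeSet % 2 = 0 := by
    rw [sumE, Finset.sum_int_mod, Finset.sum_congr rfl hAodd]
    simp only [Finset.sum_const, nsmul_eq_mul, mul_one]
    omega
  have hlt := hmin N hNpm
  rw [hsumN, abs_of_pos hpos, abs_of_nonneg (by omega)] at hlt
  omega
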